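/- There exists an absolute constant C such that the following holds. Let G be a finite abelian group (written additively) of order n ≥ 10^{100} and let k be an integer with 10 ≤ k ≤ n^{0.001}. Then there exist elements f, s ∈ G, an integer z ∈ {2,3,4,5}, and tuples F₁,…,F_t and S₁,…,S_t of elements of G with t = ⌊n/(kC)⌋ such that: (1) the tuples F₁,…,F_t are pairwise disjoint (no common entries) and the tuples S₁,…,S_t are pairwise disjoint; (2) each F_i is a 4-tuple whose entries sum to f; (3) each S_i is a z-tuple whose entries sum to s, each S_i is a rainbow path-candidate, and the family (S₁,…,S_t) is near-dissociable; (4) 4 divides k − 4 − z, and the element q := −((k − 4 − z)/4)·f − s is nonzero; (5) each F_i is the concatenation of two 2-tuples F_i⁺ and F_i⁻, each of which is a rainbow path-candidate; the family (F₁⁺,…,F_t⁺) is dissociable, the family (F₁⁻,…,F_t⁻) is dissociable, each F_i is a rainbow path-candidate, and the family (F₁,…,F_t) is near-dissociable; (6) for every integer m with 0 ≤ m ≤ k and every i, the tuples F_i⁺ and F_i⁻ are separable at distance q + m·f. -/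

import Mathlib

/-- The partial sum `c₁ + ⋯ + cⱼ` of the first `j` entries of the tuple `c`. -/
def partialSum {G : Type} [AddCommGroup G] {k : ℕ} (c : Fin k → G) (j : ℕ) : G :=
  ∑ i ∈ Finset.univ.filter (fun i : Fin k => (i : ℕ) < j), c i

/-- `(c₁, …, c_k)` is a path-candidate if its `k+1` partial sums are pairwise distinct. -/
def IsPathCandidate {G : Type} [AddCommGroup G] {k : ℕ} (c : Fin k → G) : Prop :=
  ∀ j j', j ≤ k → j' ≤ k → j ≠ j' → partialSum c j ≠ partialSum c j'

/-- Two tuples are dissociable if no nonempty initial partial sum of the first equals a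
nonempty initial partial sum of the second. -/
def DissociablePair {G : Type} [AddCommGroup G] {a b : ℕ}
    (c : Fin a → G) (d : Fin b → G) : Prop :=
  ∀ j j', 1 ≤ j → j ≤ a → 1 ≤ j' → j' ≤ b → partialSum c j ≠ partialSum d j'

/-- Near-dissociability: as dissociability but only for proper initial partial sums. -/
def NearDissociablePair {G : Type} [AddCommGroup G] {a b : ℕ}
    (c : Fin a → G) (d : Fin b → G) : Prop :=
  ∀ j j', 1 ≤ j → j ≤ a - 1 → 1 ≤ j' → j' ≤ b - 1 → partialSum c j ≠ partialSum d j'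

/-- Two tuples are separable at distance `dist` if no sum of a nonempty initial partial
sum of each lies in `{dist, -dist}`. -/
def SeparableAtDist {G : Type} [AddCommGroup G] {a b : ℕ}
    (c : Fin a → G) (d : Fin b → G) (dist : G) : Prop :=
  ∀ j j', 1 ≤ j → j ≤ a → 1 ≤ j' → j' ≤ b →
    partialSum c j + partialSum d j' ≠ dist ∧
    partialSum c j + partialSum d j' ≠ -dist

section PS
variable {G : Type} [AddCommGroup G] {k : ℕ} (c : Fin k → G)

lemma partialSum_zero : partialSum c 0 = 0 := by
  unfold partialSum
  rw [Finset.filter_false_of_mem] <;> simp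

lemma partialSum_succ (j : ℕ) (h : j < k) :
    partialSum c (j + 1) = partialSum c j + c ⟨j, h⟩ := by
  unfold partialSum
  have : Finset.univ.filter (fun i : Fin k => (i : ℕ) < j + 1)
      = insert ⟨j, h⟩ (Finset.univ.filter (fun i : Fin k => (i : ℕ) < j)) := by
    ext i
    simp only [Finset.mem_filter, Finset.mem_univ, true_and, Finset.mem_insert]
    constructor
    · intro hi
      rcases Nat.lt_succ_iff_lt_or_eq.mp hi with h' | h'
      · exact Or.inr h'
      · exact Or.inl (Fin.ext h')
    · rintro (rfl | h')
      · simp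
      · omega
  rw [this, Finset.sum_insert (by simp)]
  abel

lemma partialSum_total (j : ℕ) (h : k ≤ j) : partialSum c j = ∑ i, c i := by
  unfold partialSum
  rw [Finset.filter_true_of_mem]
  intro i _
  exact lt_of_lt_of_le i.isLt h

lemma partialSum_telescope (P : ℕ → G) (h0 : P 0 = 0)
    (hc : ∀ j : Fin k, c j = P ((j : ℕ) + 1) - P (j : ℕ)) :
    ∀ j, j ≤ k → partialSum c j = P j := by
  intro j
  induction j with
  | zero => intro _; rw [partialSum_zero, h0]
  | succ j ih =>
    intro hj
    have hjk : j < k := by omega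
    rw [partialSum_succ c j hjk, ih (by omega), hc ⟨j, hjk⟩]
    abel
end PS

lemma greedy {V : Type} [Inhabited V] (t : ℕ) (P : ℕ → (ℕ → V) → Prop)
    (hdep : ∀ i x y, (∀ j, j ≤ i → x j = y j) → P i x → P i y)
    (hex : ∀ i, i < t → ∀ x : ℕ → V, (∀ j, j < i → P j x) →
      ∃ v, P i (Function.update x i v)) :
    ∃ x, ∀ i, i < t → P i x := by
  induction t with
  | zero => exact ⟨fun _ => default, fun i h => absurd h (by omega)⟩
  | succ t ih =>
    obtain ⟨x, hx⟩ := ih (fun i hi x hp => hex i (by omega) x hp)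
    obtain ⟨v, hv⟩ := hex t (by omega) x hx
    refine ⟨Function.update x t v, fun i hi => ?_⟩
    rcases Nat.lt_succ_iff_lt_or_eq.mp hi with h | h
    · refine hdep i x _ (fun j hj => ?_) (hx i h)
      rw [Function.update_of_ne (by omega)]
    · subst h; exact hv

lemma exists_not_mem {G : Type} [Fintype G] [DecidableEq G] (B : Finset G)
    (h : B.card < Fintype.card G) : ∃ g, g ∉ B := by
  by_contra hc
  push_neg at hc
  have hsub : (Finset.univ : Finset G) ⊆ B := fun g _ => hc g
  have := Finset.card_le_card hsub
  rw [Finset.card_univ] at this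
  omega

/-- Partial-sum table: row `i`, index `j`, from free interior values `x`. -/
def PSof {G : Type} [AddCommGroup G] (z : ℕ) (s : G) (x : ℕ → ℕ → G) (i j : ℕ) : G :=
  if j = 0 then 0 else if j < z then x i (j - 1) else s

def CoreBad {G : Type} [AddCommGroup G] [Fintype G] [DecidableEq G]
    (z : ℕ) (s : G) (E2 : Finset G) (i l : ℕ) (x : ℕ → ℕ → G) : Finset G :=
  ({0, s} : Finset G)
  ∪ (Finset.range l).image (fun l' => x i l')
  ∪ (Finset.range l).image (fun j =>
      PSof z s x i l + PSof z s x i (j + 1) - PSof z s x i j)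
  ∪ (Finset.range l).image (fun j => s - PSof z s x i (j + 1) + PSof z s x i j)
  ∪ Finset.univ.filter (fun g => g + g = s + PSof z s x i l)
  ∪ E2.image (fun e => e - s)
  ∪ (Finset.range i).biUnion (fun i' =>
      (Finset.range (z - 1)).image (fun l' => x i' l')
      ∪ (Finset.range z).image (fun j =>
          PSof z s x i l + PSof z s x i' (j + 1) - PSof z s x i' j)
      ∪ (Finset.range z).image (fun j => s - PSof z s x i' (j + 1) + PSof z s x i' j))

section Tor
variable {G : Type} [AddCommGroup G] [Fintype G] [DecidableEq G]

lemma fiber_card_le (w : G) :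
    (Finset.univ.filter fun x : G => x + x = w).card
      ≤ (Finset.univ.filter fun x : G => x + x = 0).card := by
  rcases (Finset.univ.filter fun x : G => x + x = w).eq_empty_or_nonempty with h | h
  · simp [h]
  · obtain ⟨x₀, hx₀⟩ := h
    simp only [Finset.mem_filter, Finset.mem_univ, true_and] at hx₀
    apply Finset.card_le_card_of_injOn (fun x => x - x₀)
    · intro x hx
      simp only [Finset.mem_coe, Finset.mem_filter, Finset.mem_univ, true_and] at hx ⊢
      rw [← hx₀] at hx
      have : x - x₀ + (x - x₀) = (x + x) - (x₀ + x₀) := by abel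
      rw [this, hx, sub_self]
    · intro a _ b _ hab
      exact sub_left_injective hab

lemma fiber_card_eq (w : G) (hw : w ∈ Finset.univ.image (fun x : G => x + x)) :
    (Finset.univ.filter fun x : G => x + x = w).card
      = (Finset.univ.filter fun x : G => x + x = 0).card := by
  simp only [Finset.mem_image, Finset.mem_univ, true_and] at hw
  obtain ⟨x₀, hx₀⟩ := hw
  apply Finset.card_bij (fun x _ => x - x₀)
  · intro x hx
    simp only [Finset.mem_filter, Finset.mem_univ, true_and] at hx ⊢
    rw [← hx₀] at hx
    have : x - x₀ + (x - x₀) = (x + x) - (x₀ + x₀) := by abel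
    rw [this, hx, sub_self]
  · intro a ha b hb hab
    exact sub_left_injective hab
  · intro b hb
    refine ⟨b + x₀, ?_, by abel⟩
    simp only [Finset.mem_filter, Finset.mem_univ, true_and] at hb ⊢
    rw [← hx₀]
    have : b + x₀ + (b + x₀) = (b + b) + (x₀ + x₀) := by abel
    rw [this, hb, zero_add]

lemma card_tor_mul_card_double :
    (Finset.univ.filter fun x : G => x + x = 0).card
      * (Finset.univ.image fun x : G => x + x).card = Fintype.card G := by
  classical
  have h := Finset.card_eq_sum_card_fiberwise
    (f := fun x : G => x + x) (s := Finset.univ)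
    (t := Finset.univ.image fun x : G => x + x)
    (fun x _ => Finset.mem_image_of_mem _ (Finset.mem_univ x))
  rw [Finset.card_univ] at h
  rw [h, Finset.sum_congr rfl (fun w hw => (fiber_card_eq w hw)), Finset.sum_const,
    smul_eq_mul, mul_comm]
end Tor


section Pairs
variable {G : Type} [AddCommGroup G]

lemma partialSum_pair_one (x y : G) : partialSum ![x, y] 1 = x := by
  have h := partialSum_succ ![x, y] 0 (by norm_num)
  rw [partialSum_zero] at h
  simpa using h

lemma partialSum_pair_two (x y : G) : partialSum ![x, y] 2 = x + y := by
  have h := partialSum_succ ![x, y] 1 (by norm_num)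
  rw [partialSum_pair_one] at h
  simpa using h

lemma injective_pair (x y : G) (h : x ≠ y) : Function.Injective ![x, y] := by
  intro a b hab
  fin_cases a <;> fin_cases b <;> simp_all

lemma isPathCandidate_pair (x y : G) (h1 : x ≠ 0) (h2 : x + y ≠ 0)
    (h3 : x ≠ x + y) : IsPathCandidate ![x, y] := by
  intro j j' hj hj' hne
  interval_cases j <;> interval_cases j' <;>
    simp_all [partialSum_zero, partialSum_pair_one, partialSum_pair_two, eq_comm]
end Pairs

section Fam
variable {G : Type} [AddCommGroup G] [Fintype G] [DecidableEq G]

lemma PSof_congr_row (z : ℕ) (s : G) (x y : ℕ → ℕ → G) (i : ℕ)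
    (h : ∀ l', x i l' = y i l') : ∀ j, PSof z s x i j = PSof z s y i j := by
  intro j
  unfold PSof
  split_ifs with h1 h2
  · rfl
  · exact h (j - 1)
  · rfl

lemma PSof_congr_le (z : ℕ) (s : G) (x y : ℕ → ℕ → G) (i m : ℕ)
    (h : ∀ l', l' < m → x i l' = y i l') : ∀ j, j ≤ m → PSof z s x i j = PSof z s y i j := by
  intro j hj
  unfold PSof
  split_ifs with h1 h2
  · rfl
  · exact h (j - 1) (by omega)
  · rfl

lemma CoreBad_congr (z : ℕ) (s : G) (E2 : Finset G) (i l : ℕ) (x y : ℕ → ℕ → G)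
    (hprev : ∀ i', i' < i → ∀ l', x i' l' = y i' l')
    (hcur : ∀ l', l' < l → x i l' = y i l') :
    CoreBad z s E2 i l x = CoreBad z s E2 i l y := by
  have hc : ∀ j, j ≤ l → PSof z s x i j = PSof z s y i j :=
    PSof_congr_le z s x y i l hcur
  have hp : ∀ i', i' < i → ∀ j, PSof z s x i' j = PSof z s y i' j :=
    fun i' hi' => PSof_congr_row z s x y i' (hprev i' hi')
  unfold CoreBad
  rw [hc l le_rfl]
  refine congrArg₂ (· ∪ ·) (congrArg₂ (· ∪ ·) (congrArg₂ (· ∪ ·) (congrArg₂ (· ∪ ·)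
    (congrArg₂ (· ∪ ·) (congrArg₂ (· ∪ ·) rfl ?_) ?_) ?_) rfl) rfl) ?_
  · exact Finset.image_congr (fun a ha => hcur a (Finset.mem_range.mp ha))
  · refine Finset.image_congr (fun j hj => ?_)
    have hj' := Finset.mem_range.mp hj
    rw [hc (j + 1) (by omega), hc j (by omega)]
  · refine Finset.image_congr (fun j hj => ?_)
    have hj' := Finset.mem_range.mp hj
    rw [hc (j + 1) (by omega), hc j (by omega)]
  · refine Finset.biUnion_congr rfl (fun i' hi' => ?_)
    have hi'' := Finset.mem_range.mp hi'
    refine congrArg₂ (· ∪ ·) (congrArg₂ (· ∪ ·) ?_ ?_) ?_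
    · exact Finset.image_congr (fun a _ => hprev i' hi'' a)
    · exact Finset.image_congr (fun j _ => by rw [hp i' hi'' (j + 1), hp i' hi'' j])
    · exact Finset.image_congr (fun j _ => by rw [hp i' hi'' (j + 1), hp i' hi'' j])

lemma exists_family (z t : ℕ) (hz : 2 ≤ z) (s : G) (hs : s ≠ 0)
    (E2 : Finset G) (hsE : s ∉ E2)
    (hfib : ∀ w : G, w ∉ E2 →
      (Finset.univ.filter fun g : G => g + g = w).card ≤ Nat.sqrt (Fintype.card G))
    (hE2card : E2.card ≤ Nat.sqrt (Fintype.card G))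
    (Extra : ℕ → ℕ → (ℕ → ℕ → G) → Finset G) (B : ℕ)
    (hExtraCard : ∀ i, i < t → ∀ l PS, (Extra i l PS).card ≤ B)
    (hExtraDep : ∀ i l PS PS', (∀ i', i' < i → ∀ j, PS i' j = PS' i' j) →
      (∀ j, j < l → PS i j = PS' i j) → Extra i l PS = Extra i l PS')
    (hbig : 2 + 3 * z + 2 * Nat.sqrt (Fintype.card G) + 3 * z * t + B
      < Fintype.card G) :
    ∃ (PS : ℕ → ℕ → G) (c : ℕ → Fin z → G),
      (∀ i, PS i 0 = 0) ∧
      (∀ i j, z ≤ j → PS i j = s) ∧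
      (∀ i j, c i j = PS i ((j : ℕ) + 1) - PS i (j : ℕ)) ∧
      (∀ i, ∀ j, j ≤ z → partialSum (c i) j = PS i j) ∧
      (∀ i, ∑ j, c i j = s) ∧
      (∀ i, i < t → ∀ j, j ≤ z → ∀ j', j' ≤ z → j ≠ j' → PS i j ≠ PS i j') ∧
      (∀ i, i < t → Function.Injective (c i)) ∧
      (∀ i, i < t → ∀ i', i' < t → i ≠ i' → ∀ j j', 1 ≤ j → j ≤ z - 1 →
        1 ≤ j' → j' ≤ z - 1 → PS i j ≠ PS i' j') ∧
      (∀ i, i < t → ∀ i', i' < t → i ≠ i' → ∀ a b, c i a ≠ c i' b) ∧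
      (∀ i, i < t → ∀ l, 1 ≤ l → l ≤ z - 1 → PS i l ∉ Extra i l PS) := by
  classical
  haveI : Inhabited G := ⟨0⟩
  set n := Fintype.card G with hn
  -- the greedy predicate
  set Pred : ℕ → (ℕ → ℕ → G) → Prop := fun i x => ∀ l, l ≤ z - 2 →
    x i l ∉ CoreBad z s E2 i l x ∪ Extra i (l + 1) (PSof z s x) with hPred
  have hdep : ∀ i x y, (∀ j, j ≤ i → x j = y j) → Pred i x → Pred i y := by
    intro i x y hxy hP l hl
    have hcb : CoreBad z s E2 i l x = CoreBad z s E2 i l y :=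
      CoreBad_congr z s E2 i l x y
        (fun i' hi' l' => congrFun (hxy i' (le_of_lt hi')) l')
        (fun l' _ => congrFun (hxy i le_rfl) l')
    have hexq : Extra i (l + 1) (PSof z s x) = Extra i (l + 1) (PSof z s y) := by
      refine hExtraDep i (l + 1) _ _ ?_ ?_
      · intro i' hi' j
        exact PSof_congr_row z s x y i' (fun l' => congrFun (hxy i' (le_of_lt hi')) l') j
      · intro j hj
        exact PSof_congr_le z s x y i l (fun l' _ => congrFun (hxy i le_rfl) l') j (by omega)
    have hyy : y i l = x i l := (congrFun (hxy i le_rfl) l).symm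
    rw [hyy, ← hcb, ← hexq]
    exact hP l hl
  have hex : ∀ i, i < t → ∀ x : ℕ → ℕ → G, (∀ j, j < i → Pred j x) →
      ∃ v, Pred i (Function.update x i v) := by
    intro i hi x _
    -- inner greedy choosing the interior partial sums of row i
    set P' : ℕ → (ℕ → G) → Prop := fun l q =>
      q l ∉ CoreBad z s E2 i l (Function.update x i q)
        ∪ Extra i (l + 1) (PSof z s (Function.update x i q)) with hP'
    have hdep' : ∀ l q r, (∀ j, j ≤ l → q j = r j) → P' l q → P' l r := by
      intro l q r hqr hq
      have hrows : ∀ i', i' ≠ i → ∀ l',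
          Function.update x i q i' l' = Function.update x i r i' l' := by
        intro i' hi' l'
        rw [Function.update_of_ne hi', Function.update_of_ne hi']
      have hcb : CoreBad z s E2 i l (Function.update x i q)
          = CoreBad z s E2 i l (Function.update x i r) := by
        refine CoreBad_congr z s E2 i l _ _ (fun i' hi' => hrows i' (by omega)) ?_
        intro l' hl'
        simp only [Function.update_self]
        exact hqr l' (by omega)
      have hexq : Extra i (l + 1) (PSof z s (Function.update x i q))
          = Extra i (l + 1) (PSof z s (Function.update x i r)) := by
        refine hExtraDep i (l + 1) _ _ ?_ ?_
        · intro i' hi' j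
          exact PSof_congr_row z s _ _ i' (hrows i' (by omega)) j
        · intro j hj
          refine PSof_congr_le z s _ _ i l ?_ j (by omega)
          intro l' hl'
          simp only [Function.update_self]
          exact hqr l' (by omega)
      show r l ∉ CoreBad z s E2 i l (Function.update x i r)
        ∪ Extra i (l + 1) (PSof z s (Function.update x i r))
      rw [← hqr l le_rfl, ← hcb, ← hexq]
      exact hq
    have hex' : ∀ l, l < z - 1 → ∀ q : ℕ → G, (∀ j, j < l → P' j q) →
        ∃ v, P' l (Function.update q l v) := by
      intro l hl q hprev
      set X := Function.update x i q with hX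
      -- the fiber is small
      have hfw : s + PSof z s X i l ∉ E2 := by
        rcases Nat.eq_zero_or_pos l with rfl | hlpos
        · have : PSof z s X i 0 = 0 := by simp [PSof]
          rw [this, add_zero]; exact hsE
        · have hPSl : PSof z s X i l = q (l - 1) := by
            unfold PSof
            rw [if_neg (by omega), if_pos (by omega), hX, Function.update_self]
          intro hmem
          have h1 := hprev (l - 1) (by omega)
          rw [hP'] at h1
          simp only [Finset.mem_union, not_or] at h1
          have h2 := h1.1
          unfold CoreBad at h2
          simp only [Finset.mem_union, not_or] at h2
          have h3 := h2.1.2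
          simp only [Finset.mem_image, not_exists, not_and] at h3
          exact h3 (s + PSof z s X i l) hmem (by rw [hPSl]; abel)
      have hcard : (CoreBad z s E2 i l X ∪ Extra i (l + 1) (PSof z s X)).card < n := by
        have c1 : (CoreBad z s E2 i l X).card
            ≤ 2 + l + l + l + Nat.sqrt n + Nat.sqrt n + i * ((z - 1) + z + z) := by
          unfold CoreBad
          refine le_trans (Finset.card_union_le _ _) ?_
          gcongr ?_ + ?_
          · refine le_trans (Finset.card_union_le _ _) ?_
            gcongr ?_ + ?_
            · refine le_trans (Finset.card_union_le _ _) ?_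
              gcongr ?_ + ?_
              · refine le_trans (Finset.card_union_le _ _) ?_
                gcongr ?_ + ?_
                · refine le_trans (Finset.card_union_le _ _) ?_
                  gcongr ?_ + ?_
                  · refine le_trans (Finset.card_union_le _ _) ?_
                    gcongr ?_ + ?_
                    · exact le_trans (Finset.card_insert_le _ _) (by simp)
                    · exact le_trans (Finset.card_image_le) (by simp)
                  · exact le_trans (Finset.card_image_le) (by simp)
                · exact le_trans (Finset.card_image_le) (by simp)
              · exact hfib _ hfw
            · exact le_trans (Finset.card_image_le) hE2card
          · refine le_trans (Finset.card_biUnion_le) ?_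
            refine le_trans (Finset.sum_le_card_nsmul _ _ ((z - 1) + z + z) ?_) (by simp)
            intro i' _
            refine le_trans (Finset.card_union_le _ _) ?_
            gcongr ?_ + ?_
            · refine le_trans (Finset.card_union_le _ _) ?_
              gcongr ?_ + ?_
              · exact le_trans (Finset.card_image_le) (by simp)
              · exact le_trans (Finset.card_image_le) (by simp)
            · exact le_trans (Finset.card_image_le) (by simp)
        have c2 : (Extra i (l + 1) (PSof z s X)).card ≤ B := hExtraCard i hi _ _
        have c3 : i * ((z - 1) + z + z) ≤ 3 * z * t := by
          calc i * ((z - 1) + z + z) ≤ t * (3 * z) :=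
                Nat.mul_le_mul (le_of_lt hi) (by omega)
            _ = 3 * z * t := by ring
        have := Finset.card_union_le (CoreBad z s E2 i l X) (Extra i (l + 1) (PSof z s X))
        omega
      obtain ⟨g, hg⟩ := exists_not_mem _ hcard
      refine ⟨g, ?_⟩
      show Function.update q l g l ∉ CoreBad z s E2 i l (Function.update x i (Function.update q l g))
        ∪ Extra i (l + 1) (PSof z s (Function.update x i (Function.update q l g)))
      have hrows : ∀ i', i' ≠ i → ∀ l',
          Function.update x i (Function.update q l g) i' l' = X i' l' := by
        intro i' hi' l'
        rw [Function.update_of_ne hi', hX, Function.update_of_ne hi']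
      have hcur : ∀ l', l' < l →
          Function.update x i (Function.update q l g) i l' = X i l' := by
        intro l' hl'
        simp only [Function.update_self, hX]
        rw [Function.update_of_ne (by omega)]
      have hcb : CoreBad z s E2 i l (Function.update x i (Function.update q l g))
          = CoreBad z s E2 i l X :=
        CoreBad_congr z s E2 i l _ _ (fun i' hi' => hrows i' (by omega)) hcur
      have hexq : Extra i (l + 1) (PSof z s (Function.update x i (Function.update q l g)))
          = Extra i (l + 1) (PSof z s X) := by
        refine hExtraDep i (l + 1) _ _ ?_ ?_
        · intro i' hi' j
          exact PSof_congr_row z s _ _ i' (hrows i' (by omega)) j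
        · intro j hj
          exact PSof_congr_le z s _ _ i l hcur j (by omega)
      simp only [Function.update_self]
      rw [hcb, hexq]
      exact hg
    obtain ⟨q, hq⟩ := greedy (z - 1) P' hdep' hex'
    refine ⟨q, ?_⟩
    intro l hl
    have := hq l (by omega)
    rw [hP'] at this
    simpa only [Function.update_self] using this
  obtain ⟨x, hx⟩ := greedy t Pred hdep hex
  set PS : ℕ → ℕ → G := PSof z s x with hPSdef
  have hPS0 : ∀ i, PS i 0 = 0 := fun i => by rw [hPSdef]; unfold PSof; simp
  have hPSz : ∀ i j, z ≤ j → PS i j = s := by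
    intro i j hj
    rw [hPSdef]; unfold PSof; rw [if_neg (by omega), if_neg (by omega)]
  have hPSx : ∀ i l, l + 1 < z → PS i (l + 1) = x i l := by
    intro i l hl
    rw [hPSdef]; unfold PSof; rw [if_neg (by omega), if_pos (by omega)]
    simp
  have hxm : ∀ i, i < t → ∀ l, l ≤ z - 2 →
      x i l ∉ CoreBad z s E2 i l x ∧ x i l ∉ Extra i (l + 1) (PSof z s x) := by
    intro i hi l hl
    have h := hx i hi l hl
    rw [Finset.mem_union] at h
    exact ⟨fun hh => h (Or.inl hh), fun hh => h (Or.inr hh)⟩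
  -- granular consequences of avoiding `CoreBad`
  have hA0 : ∀ i, i < t → ∀ l, l ≤ z - 2 → x i l ≠ 0 := by
    intro i hi l hl heq
    refine (hxm i hi l hl).1 ?_
    unfold CoreBad
    refine Finset.mem_union_left _ (Finset.mem_union_left _ (Finset.mem_union_left _
      (Finset.mem_union_left _ (Finset.mem_union_left _ (Finset.mem_union_left _ ?_)))))
    exact Finset.mem_insert.mpr (Or.inl heq)
  have hAs : ∀ i, i < t → ∀ l, l ≤ z - 2 → x i l ≠ s := by
    intro i hi l hl heq
    refine (hxm i hi l hl).1 ?_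
    unfold CoreBad
    refine Finset.mem_union_left _ (Finset.mem_union_left _ (Finset.mem_union_left _
      (Finset.mem_union_left _ (Finset.mem_union_left _ (Finset.mem_union_left _ ?_)))))
    exact Finset.mem_insert.mpr (Or.inr (Finset.mem_singleton.mpr heq))
  have hB : ∀ i, i < t → ∀ l, l ≤ z - 2 → ∀ l', l' < l → x i l' ≠ x i l := by
    intro i hi l hl l' hl' heq
    refine (hxm i hi l hl).1 ?_
    unfold CoreBad
    refine Finset.mem_union_left _ (Finset.mem_union_left _ (Finset.mem_union_left _
      (Finset.mem_union_left _ (Finset.mem_union_left _ (Finset.mem_union_right _ ?_)))))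
    exact Finset.mem_image.mpr ⟨l', Finset.mem_range.mpr hl', heq⟩
  have hC : ∀ i, i < t → ∀ l, l ≤ z - 2 → ∀ j, j < l →
      PS i l + PS i (j + 1) - PS i j ≠ x i l := by
    intro i hi l hl j hj heq
    refine (hxm i hi l hl).1 ?_
    unfold CoreBad
    rw [← hPSdef]
    refine Finset.mem_union_left _ (Finset.mem_union_left _ (Finset.mem_union_left _
      (Finset.mem_union_left _ (Finset.mem_union_right _ ?_))))
    exact Finset.mem_image.mpr ⟨j, Finset.mem_range.mpr hj, heq⟩
  have hD : ∀ i, i < t → ∀ l, l ≤ z - 2 → ∀ j, j < l →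
      s - PS i (j + 1) + PS i j ≠ x i l := by
    intro i hi l hl j hj heq
    refine (hxm i hi l hl).1 ?_
    unfold CoreBad
    rw [← hPSdef]
    refine Finset.mem_union_left _ (Finset.mem_union_left _ (Finset.mem_union_left _
      (Finset.mem_union_right _ ?_)))
    exact Finset.mem_image.mpr ⟨j, Finset.mem_range.mpr hj, heq⟩
  have hE : ∀ i, i < t → ∀ l, l ≤ z - 2 → x i l + x i l ≠ s + PS i l := by
    intro i hi l hl heq
    refine (hxm i hi l hl).1 ?_
    unfold CoreBad
    rw [← hPSdef]
    refine Finset.mem_union_left _ (Finset.mem_union_left _ (Finset.mem_union_right _ ?_))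
    exact Finset.mem_filter.mpr ⟨Finset.mem_univ _, heq⟩
  have hG1 : ∀ i, i < t → ∀ l, l ≤ z - 2 → ∀ i', i' < i → ∀ l', l' < z - 1 →
      x i' l' ≠ x i l := by
    intro i hi l hl i' hi' l' hl' heq
    refine (hxm i hi l hl).1 ?_
    unfold CoreBad
    refine Finset.mem_union_right _ ?_
    refine Finset.mem_biUnion.mpr ⟨i', Finset.mem_range.mpr hi', ?_⟩
    refine Finset.mem_union_left _ (Finset.mem_union_left _ ?_)
    exact Finset.mem_image.mpr ⟨l', Finset.mem_range.mpr hl', heq⟩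
  have hG2 : ∀ i, i < t → ∀ l, l ≤ z - 2 → ∀ i', i' < i → ∀ j, j < z →
      PS i l + PS i' (j + 1) - PS i' j ≠ x i l := by
    intro i hi l hl i' hi' j hj heq
    refine (hxm i hi l hl).1 ?_
    unfold CoreBad
    rw [← hPSdef]
    refine Finset.mem_union_right _ ?_
    refine Finset.mem_biUnion.mpr ⟨i', Finset.mem_range.mpr hi', ?_⟩
    refine Finset.mem_union_left _ (Finset.mem_union_right _ ?_)
    exact Finset.mem_image.mpr ⟨j, Finset.mem_range.mpr hj, heq⟩
  have hG3 : ∀ i, i < t → ∀ l, l ≤ z - 2 → ∀ i', i' < i → ∀ j, j < z →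
      s - PS i' (j + 1) + PS i' j ≠ x i l := by
    intro i hi l hl i' hi' j hj heq
    refine (hxm i hi l hl).1 ?_
    unfold CoreBad
    rw [← hPSdef]
    refine Finset.mem_union_right _ ?_
    refine Finset.mem_biUnion.mpr ⟨i', Finset.mem_range.mpr hi', ?_⟩
    refine Finset.mem_union_right _ ?_
    exact Finset.mem_image.mpr ⟨j, Finset.mem_range.mpr hj, heq⟩
  -- the tuples
  set c : ℕ → Fin z → G := fun i j => PS i ((j : ℕ) + 1) - PS i (j : ℕ) with hcdef
  have hcval : ∀ i (j : Fin z), c i j = PS i ((j : ℕ) + 1) - PS i (j : ℕ) :=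
    fun _ _ => rfl
  have hps : ∀ i, ∀ j, j ≤ z → partialSum (c i) j = PS i j :=
    fun i => partialSum_telescope (c i) (PS i) (hPS0 i) (fun j => rfl)
  have hsum : ∀ i, ∑ j, c i j = s := by
    intro i
    rw [← partialSum_total (c i) z le_rfl, hps i z le_rfl, hPSz i z le_rfl]
  -- (R1) distinct partial sums within a tuple
  have R1 : ∀ i, i < t → ∀ j, j ≤ z → ∀ j', j' ≤ z → j ≠ j' → PS i j ≠ PS i j' := by
    have aux : ∀ i, i < t → ∀ j j', j' < j → j ≤ z → PS i j ≠ PS i j' := by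
      intro i hi j j' hjj hjz
      rcases Nat.lt_or_ge j z with hjlt | hjge
      · have e1 : j - 1 + 1 = j := by omega
        have hPSj : PS i j = x i (j - 1) := by rw [← e1]; exact hPSx i (j - 1) (by omega)
        rcases Nat.eq_zero_or_pos j' with rfl | hj'pos
        · rw [hPS0, hPSj]; exact hA0 i hi (j - 1) (by omega)
        · have e2 : j' - 1 + 1 = j' := by omega
          have hPSj' : PS i j' = x i (j' - 1) := by
            rw [← e2]; exact hPSx i (j' - 1) (by omega)
          rw [hPSj, hPSj']
          exact (hB i hi (j - 1) (by omega) (j' - 1) (by omega)).symm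
      · have hPSj : PS i j = s := hPSz i j hjge
        rcases Nat.eq_zero_or_pos j' with rfl | hj'pos
        · rw [hPSj, hPS0]; exact hs
        · have hj'z : j' < z := by omega
          have e2 : j' - 1 + 1 = j' := by omega
          have hPSj' : PS i j' = x i (j' - 1) := by
            rw [← e2]; exact hPSx i (j' - 1) (by omega)
          rw [hPSj, hPSj']
          exact (hAs i hi (j' - 1) (by omega)).symm
    intro i hi j hj j' hj' hne
    rcases Nat.lt_or_ge j' j with h | h
    · exact aux i hi j j' h hj
    · exact (aux i hi j' j (by omega) hj').symm
  -- (R2) injectivity (rainbow)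
  have R2 : ∀ i, i < t → Function.Injective (c i) := by
    have aux : ∀ i, i < t → ∀ a b : Fin z, (b : ℕ) < (a : ℕ) → c i a ≠ c i b := by
      intro i hi a b hba heq
      rw [hcval, hcval] at heq
      rcases Nat.lt_or_ge ((a : ℕ) + 1) z with h1 | h1
      · have hx1 : PS i ((a : ℕ) + 1) = x i (a : ℕ) := hPSx i a h1
        refine hC i hi (a : ℕ) (by omega) (b : ℕ) hba ?_
        rw [← hx1]
        calc PS i (a : ℕ) + PS i ((b : ℕ) + 1) - PS i (b : ℕ)
            = PS i (a : ℕ) + (PS i ((b : ℕ) + 1) - PS i (b : ℕ)) := by abel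
          _ = PS i (a : ℕ) + (PS i ((a : ℕ) + 1) - PS i (a : ℕ)) := by rw [heq]
          _ = PS i ((a : ℕ) + 1) := by abel
      · have hza := a.isLt
        have hPSa1 : PS i ((a : ℕ) + 1) = s := hPSz i _ h1
        have haz : (a : ℕ) = z - 1 := by omega
        have e3 : z - 2 + 1 = z - 1 := by omega
        have hx1 : PS i (z - 1) = x i (z - 2) := by
          rw [← e3]; exact hPSx i (z - 2) (by omega)
        rcases Nat.lt_or_ge ((b : ℕ)) (z - 2) with h2 | h2
        · refine hD i hi (z - 2) le_rfl (b : ℕ) h2 ?_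
          rw [← hx1, ← haz]
          calc s - PS i ((b : ℕ) + 1) + PS i (b : ℕ)
              = s - (PS i ((b : ℕ) + 1) - PS i (b : ℕ)) := by abel
            _ = s - (PS i ((a : ℕ) + 1) - PS i (a : ℕ)) := by rw [heq]
            _ = PS i (a : ℕ) := by rw [hPSa1]; abel
        · have hbz : (b : ℕ) = z - 2 := by omega
          refine hE i hi (z - 2) le_rfl ?_
          have e4 : (b : ℕ) + 1 = z - 1 := by omega
          rw [hPSa1, haz, e4, hbz] at heq
          rw [← hx1]
          calc PS i (z - 1) + PS i (z - 1)
              = s - (s - PS i (z - 1)) + PS i (z - 1) := by abel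
            _ = s - (PS i (z - 1) - PS i (z - 2)) + PS i (z - 1) := by rw [heq]
            _ = s + PS i (z - 2) + (PS i (z - 1) - PS i (z - 1)) := by abel
            _ = s + PS i (z - 2) := by abel
    intro i hi a b heq
    by_contra hne
    rcases lt_trichotomy ((a : ℕ)) ((b : ℕ)) with h | h | h
    · exact aux i hi b a h heq.symm
    · exact hne (Fin.ext h)
    · exact aux i hi a b h heq
  -- (R3) near-dissociability across tuples
  have R3 : ∀ i, i < t → ∀ i', i' < t → i ≠ i' → ∀ j j', 1 ≤ j → j ≤ z - 1 →
      1 ≤ j' → j' ≤ z - 1 → PS i j ≠ PS i' j' := by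
    have aux : ∀ i, i < t → ∀ i', i' < i → ∀ j j', 1 ≤ j → j ≤ z - 1 →
        1 ≤ j' → j' ≤ z - 1 → PS i j ≠ PS i' j' := by
      intro i hi i' hi' j j' h1 h2 h3 h4 heq
      have e1 : j - 1 + 1 = j := by omega
      have e2 : j' - 1 + 1 = j' := by omega
      have hx1 : PS i j = x i (j - 1) := by rw [← e1]; exact hPSx i (j - 1) (by omega)
      have hx2 : PS i' j' = x i' (j' - 1) := by rw [← e2]; exact hPSx i' (j' - 1) (by omega)
      exact hG1 i hi (j - 1) (by omega) i' hi' (j' - 1) (by omega)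
        (by rw [← hx2, ← hx1, heq])
    intro i hi i' hi' hne j j' h1 h2 h3 h4
    rcases Nat.lt_or_ge i' i with h | h
    · exact aux i hi i' h j j' h1 h2 h3 h4
    · exact (aux i' hi' i (by omega) j' j h3 h4 h1 h2).symm
  -- (R4) entries disjoint across tuples
  have R4 : ∀ i, i < t → ∀ i', i' < t → i ≠ i' → ∀ a b : Fin z, c i a ≠ c i' b := by
    have aux : ∀ i, i < t → ∀ i', i' < i → ∀ a b : Fin z, c i a ≠ c i' b := by
      intro i hi i' hi' a b heq
      rw [hcval, hcval] at heq
      rcases Nat.lt_or_ge ((a : ℕ) + 1) z with h1 | h1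
      · have hx1 : PS i ((a : ℕ) + 1) = x i (a : ℕ) := hPSx i a h1
        refine hG2 i hi (a : ℕ) (by omega) i' hi' (b : ℕ) b.isLt ?_
        rw [← hx1]
        calc PS i (a : ℕ) + PS i' ((b : ℕ) + 1) - PS i' (b : ℕ)
            = PS i (a : ℕ) + (PS i' ((b : ℕ) + 1) - PS i' (b : ℕ)) := by abel
          _ = PS i (a : ℕ) + (PS i ((a : ℕ) + 1) - PS i (a : ℕ)) := by rw [heq]
          _ = PS i ((a : ℕ) + 1) := by abel
      · have hza := a.isLt
        have hPSa1 : PS i ((a : ℕ) + 1) = s := hPSz i _ h1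
        have haz : (a : ℕ) = z - 1 := by omega
        have e3 : z - 2 + 1 = z - 1 := by omega
        have hx1 : PS i (z - 1) = x i (z - 2) := by
          rw [← e3]; exact hPSx i (z - 2) (by omega)
        refine hG3 i hi (z - 2) le_rfl i' hi' (b : ℕ) b.isLt ?_
        rw [← hx1, ← haz]
        calc s - PS i' ((b : ℕ) + 1) + PS i' (b : ℕ)
            = s - (PS i' ((b : ℕ) + 1) - PS i' (b : ℕ)) := by abel
          _ = s - (PS i ((a : ℕ) + 1) - PS i (a : ℕ)) := by rw [heq]
          _ = PS i (a : ℕ) := by rw [hPSa1]; abel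
    intro i hi i' hi' hne a b heq
    rcases Nat.lt_or_ge i' i with h | h
    · exact aux i hi i' h a b heq
    · exact aux i' hi' i (by omega) b a heq.symm
  -- (R5) the extra conditions
  have R5 : ∀ i, i < t → ∀ l, 1 ≤ l → l ≤ z - 1 → PS i l ∉ Extra i l PS := by
    intro i hi l h1 h2
    have e1 : l - 1 + 1 = l := by omega
    have hx1 : PS i l = x i (l - 1) := by rw [← e1]; exact hPSx i (l - 1) (by omega)
    have h3 := (hxm i hi (l - 1) (by omega)).2
    rw [e1] at h3
    rw [hx1]
    rw [hPSdef]
    exact h3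
  exact ⟨PS, c, hPS0, hPSz, hcval, hps, hsum, R1, R2, R3, R4, R5⟩
end Fam

/-- Existence of the special families `𝓕_G` and `𝓢_G` of tuples used in the cover-down
step for large `k`. -/
theorem special_families_exist :
    ∃ C : ℕ, 0 < C ∧
    ∀ (G : Type) [AddCommGroup G] [Fintype G] [DecidableEq G], ∀ k : ℕ,
      10 ^ 100 ≤ Fintype.card G →
      10 ≤ k → (k : ℝ) ≤ (Fintype.card G : ℝ) ^ (0.001 : ℝ) →
      ∃ (f s : G) (z : ℕ), 2 ≤ z ∧ z ≤ 5 ∧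
      ∃ (F : Fin (Fintype.card G / (k * C)) → Fin 4 → G)
        (Sq : Fin (Fintype.card G / (k * C)) → Fin z → G)
        (Fp Fm : Fin (Fintype.card G / (k * C)) → Fin 2 → G),
        -- (1) the tuples of each family are pairwise disjoint
        (∀ i i', i ≠ i' → ∀ a b, F i a ≠ F i' b) ∧
        (∀ i i', i ≠ i' → ∀ a b, Sq i a ≠ Sq i' b) ∧
        -- (2) each F i is a 4-tuple with sum f
        (∀ i, (∑ j, F i j) = f) ∧
        -- (3) each Sq i is a z-tuple with sum s, a rainbow path-candidate, and the
        -- family is near-dissociable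
        (∀ i, (∑ j, Sq i j) = s) ∧
        (∀ i, Function.Injective (Sq i) ∧ IsPathCandidate (Sq i)) ∧
        (∀ i i', i ≠ i' → NearDissociablePair (Sq i) (Sq i')) ∧
        -- (4) divisibility and q ≠ 0
        (4 ∣ (k - 4 - z)) ∧
        ((-(((k - 4 - z) / 4) • f) - s) ≠ 0) ∧
        -- (5) each F i is the concatenation of the 2-tuples Fp i and Fm i
        (∀ i, F i 0 = Fp i 0 ∧ F i 1 = Fp i 1 ∧ F i 2 = Fm i 0 ∧ F i 3 = Fm i 1) ∧
        (∀ i, Function.Injective (Fp i) ∧ IsPathCandidate (Fp i)) ∧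
        (∀ i, Function.Injective (Fm i) ∧ IsPathCandidate (Fm i)) ∧
        (∀ i i', i ≠ i' → DissociablePair (Fp i) (Fp i')) ∧
        (∀ i i', i ≠ i' → DissociablePair (Fm i) (Fm i')) ∧
        (∀ i, Function.Injective (F i) ∧ IsPathCandidate (F i)) ∧
        (∀ i i', i ≠ i' → NearDissociablePair (F i) (F i')) ∧
        -- (6) separability at the distances q + m • f
        (∀ m : ℕ, m ≤ k → ∀ i,
          SeparableAtDist (Fp i) (Fm i)
            ((-(((k - 4 - z) / 4) • f) - s) + m • f)) := by
  refine ⟨100000, by norm_num, ?_⟩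
  intro G _ _ _ k hcard hk10 hkR
  classical
  set n := Fintype.card G with hn
  -- numeric facts
  have hk1000 : k ^ 1000 ≤ n := by
    have h1 : (0 : ℝ) ≤ (n : ℝ) := Nat.cast_nonneg n
    have h2 : ((k : ℝ)) ^ (1000 : ℕ) ≤ ((n : ℝ) ^ (0.001 : ℝ)) ^ (1000 : ℕ) :=
      pow_le_pow_left₀ (by positivity) hkR 1000
    have h3 : ((n : ℝ) ^ (0.001 : ℝ)) ^ (1000 : ℕ) = (n : ℝ) := by
      rw [← Real.rpow_natCast ((n : ℝ) ^ (0.001 : ℝ)) 1000, ← Real.rpow_mul h1]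
      norm_num
    rw [h3] at h2
    exact_mod_cast h2
  have hkn : k * 10 ^ 999 ≤ n := by
    calc k * 10 ^ 999 ≤ k * k ^ 999 :=
          Nat.mul_le_mul_left k (Nat.pow_le_pow_left hk10 999)
      _ = k ^ 1000 := by ring
      _ ≤ n := hk1000
  set t := n / (k * 100000) with ht
  have ht6 : t * 10 ^ 6 ≤ n := by
    calc t * 10 ^ 6 ≤ t * (k * 100000) := by
          refine Nat.mul_le_mul_left t ?_
          calc (10 : ℕ) ^ 6 = 10 * 100000 := by norm_num
            _ ≤ k * 100000 := Nat.mul_le_mul_right _ hk10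
      _ ≤ n := Nat.div_mul_le_self _ _
  have hsq1 : Nat.sqrt n * Nat.sqrt n ≤ n := Nat.sqrt_le n
  have hsq2 : 10 ^ 50 ≤ Nat.sqrt n := Nat.le_sqrt.mpr (by norm_num; exact hcard)
  have hsqn : Nat.sqrt n * 10 ^ 50 ≤ n :=
    le_trans (Nat.mul_le_mul_left _ hsq2) hsq1
  -- 2-torsion business
  set S2 : Finset G := Finset.univ.filter (fun g : G => g + g = 0) with hS2d
  set D2 : Finset G := Finset.univ.image (fun g : G => g + g) with hD2d
  have hprod : S2.card * D2.card = n := card_tor_mul_card_double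
  set E2 : Finset G := if S2.card ≤ D2.card then (∅ : Finset G) else D2 with hE2d
  have hE2card : E2.card ≤ Nat.sqrt n := by
    rw [hE2d]
    split_ifs with h
    · simp
    · refine Nat.le_sqrt.mpr ?_
      calc D2.card * D2.card ≤ S2.card * D2.card :=
            Nat.mul_le_mul_right _ (le_of_lt (not_le.mp h))
        _ = n := hprod
  have hfib : ∀ w : G, w ∉ E2 →
      (Finset.univ.filter fun g : G => g + g = w).card ≤ Nat.sqrt n := by
    intro w hw
    rw [hE2d] at hw
    split_ifs at hw with h
    · refine le_trans (fiber_card_le w) (Nat.le_sqrt.mpr ?_)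
      calc S2.card * S2.card ≤ S2.card * D2.card := Nat.mul_le_mul_left _ h
        _ = n := hprod
    · have hempty : (Finset.univ.filter fun g : G => g + g = w) = ∅ := by
        rw [Finset.filter_eq_empty_iff]
        intro g _ hg
        exact hw (by rw [hD2d]; exact Finset.mem_image.mpr ⟨g, Finset.mem_univ g, hg⟩)
      rw [hempty]
      simp
  -- choose f
  obtain ⟨f, hf⟩ := exists_not_mem ({0} ∪ E2) (by
    have h1 := Finset.card_union_le ({0} : Finset G) E2
    have h2 : ({0} : Finset G).card = 1 := Finset.card_singleton 0
    omega)
  have hf0 : f ≠ 0 := fun h => hf (Finset.mem_union_left _ (by simp [h]))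
  have hfE2 : f ∉ E2 := fun h => hf (Finset.mem_union_right _ h)
  -- choose z, M
  set z := (k - 2) % 4 + 2 with hzd
  have hz2 : 2 ≤ z := by omega
  have hz5 : z ≤ 5 := by omega
  have hdvd : 4 ∣ (k - 4 - z) := by omega
  set M := (k - 4 - z) / 4 with hMd
  have hMk : M ≤ k := by omega
  -- choose s
  set Zf : Finset G := (Finset.Icc (-(M : ℤ) - 1) ((k : ℤ) - M + 1)).image
    (fun j => j • f) with hZfd
  have hZfcard : Zf.card ≤ k + M + 3 := by
    refine le_trans Finset.card_image_le ?_
    rw [Int.card_Icc]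
    have : ((k : ℤ) - M + 1 + 1 - (-(M : ℤ) - 1)) = (k : ℤ) + 3 := by ring
    rw [this]
    omega
  obtain ⟨s, hs⟩ := exists_not_mem (Zf ∪ E2) (by
    have h1 := Finset.card_union_le Zf E2
    omega)
  have hsZf : s ∉ Zf := fun h => hs (Finset.mem_union_left _ h)
  have hsE2 : s ∉ E2 := fun h => hs (Finset.mem_union_right _ h)
  have hmemZf : ∀ j : ℤ, -(M : ℤ) - 1 ≤ j → j ≤ (k : ℤ) - M + 1 → j • f ∈ Zf := by
    intro j h1 h2
    rw [hZfd]
    exact Finset.mem_image.mpr ⟨j, Finset.mem_Icc.mpr ⟨h1, h2⟩, rfl⟩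
  have hs0 : s ≠ 0 := by
    intro h
    refine hsZf ?_
    have : (0 : ℤ) • f = s := by rw [zero_zsmul, h]
    rw [← this]
    exact hmemZf 0 (by omega) (by omega)
  -- q and Q
  set qe : G := -(M • f) - s with hqed
  have hq0 : qe ≠ 0 := by
    intro h
    refine hsZf ?_
    have hsv : s = -(M • f) := by
      have := sub_eq_zero.mp h
      rw [← this]
    have : (-(M : ℤ)) • f = s := by
      rw [neg_zsmul, natCast_zsmul, hsv]
    rw [← this]
    exact hmemZf (-(M : ℤ)) (by omega) (by omega)
  set Q : Finset G := (Finset.range (k + 1)).image (fun m => qe + m • f)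
      ∪ (Finset.range (k + 1)).image (fun m => -(qe + m • f)) with hQd
  have hQcard : Q.card ≤ 2 * (k + 1) := by
    refine le_trans (Finset.card_union_le _ _) ?_
    have h1 := Finset.card_image_le (s := Finset.range (k + 1)) (f := fun m => qe + m • f)
    have h2 := Finset.card_image_le (s := Finset.range (k + 1)) (f := fun m => -(qe + m • f))
    rw [Finset.card_range] at h1 h2
    omega
  have hfQ : f ∉ Q := by
    intro hfQ'
    rw [hQd, Finset.mem_union] at hfQ'
    rcases hfQ' with h | h
    · obtain ⟨m, hm, hme⟩ := Finset.mem_image.mp h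
      rw [Finset.mem_range] at hm
      refine hsZf ?_
      have h2 : -(M • f) - s + m • f = f := by rw [← hqed]; exact hme
      have h4 : -(M • f) + m • f = f + s := by
        calc -(M • f) + m • f = -(M • f) - s + m • f + s := by abel
          _ = f + s := by rw [h2]
      have h5 : s = -(M • f) + m • f - f := by rw [h4]; abel
      have h6 : ((m : ℤ) - M - 1) • f = s := by
        rw [sub_zsmul, sub_zsmul, one_zsmul, natCast_zsmul, natCast_zsmul, h5]
        abel
      rw [← h6]
      exact hmemZf _ (by omega) (by omega)
    · obtain ⟨m, hm, hme⟩ := Finset.mem_image.mp h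
      rw [Finset.mem_range] at hm
      refine hsZf ?_
      have h2' : qe + m • f = -f := neg_eq_iff_eq_neg.mp hme
      have h2 : -(M • f) - s + m • f = -f := by rw [← hqed]; exact h2'
      have h4 : -(M • f) + m • f = -f + s := by
        calc -(M • f) + m • f = -(M • f) - s + m • f + s := by abel
          _ = -f + s := by rw [h2]
      have h5 : s = f - M • f + m • f := by
        calc s = f + (-f + s) := by abel
          _ = f + (-(M • f) + m • f) := by rw [← h4]
          _ = f - M • f + m • f := by abel
      have h6 : (1 - (M : ℤ) + m) • f = s := by
        rw [add_zsmul, sub_zsmul, one_zsmul, natCast_zsmul, natCast_zsmul, h5]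
        abel
      rw [← h6]
      exact hmemZf _ (by omega) (by omega)
  have hdistQ : ∀ m : ℕ, m ≤ k → (qe + m • f) ∈ Q ∧ (-(qe + m • f)) ∈ Q := by
    intro m hm
    constructor
    · rw [hQd]
      exact Finset.mem_union_left _
        (Finset.mem_image.mpr ⟨m, Finset.mem_range.mpr (by omega), rfl⟩)
    · rw [hQd]
      exact Finset.mem_union_right _
        (Finset.mem_image.mpr ⟨m, Finset.mem_range.mpr (by omega), rfl⟩)
  -- the S-family
  obtain ⟨PSS, cS, hSPS0, hSPSz, hScval, hSps, hSsum, S1, S2r, S3, S4, -⟩ :=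
    exists_family z t hz2 s hs0 E2 hsE2 hfib hE2card
      (fun _ _ _ => (∅ : Finset G)) 0 (fun _ _ _ _ => by simp)
      (fun _ _ _ _ _ _ => rfl)
      (by
        rw [← hn]
        have e1 : 3 * z * t ≤ 15 * t := Nat.mul_le_mul_right t (by omega)
        have e2 : 3 * z ≤ 15 := by omega
        generalize hgen : 3 * z * t = w at e1 ⊢
        generalize hgen2 : 3 * z = zz at e2 ⊢
        clear_value t n
        omega)
  -- the F-family
  set ExtraF : ℕ → ℕ → (ℕ → ℕ → G) → Finset G := fun i l PS =>
    if l = 2 then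
      Q.image (fun u => PS i 1 + f - u)
      ∪ (Finset.range i).image (fun i' => f - PS i' 3 + PS i' 2)
    else if l = 3 then
      Q ∪ Q.image (fun u => u + PS i 2 - PS i 1)
      ∪ (Finset.range i).biUnion (fun i' =>
          {PS i 2 + PS i' 3 - PS i' 2, PS i 2 + f - PS i' 2})
    else (∅ : Finset G) with hExFd
  have hExCard : ∀ i, i < t → ∀ l PS, (ExtraF i l PS).card ≤ 4 * k + 4 + 2 * t := by
    intro i hi l PS
    simp only [hExFd]
    split_ifs with h1 h2
    · refine le_trans (Finset.card_union_le _ _) ?_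
      have e1 := Finset.card_image_le (s := Q) (f := fun u => PS i 1 + f - u)
      have e2 := Finset.card_image_le (s := Finset.range i)
        (f := fun i' => f - PS i' 3 + PS i' 2)
      rw [Finset.card_range] at e2
      omega
    · refine le_trans (Finset.card_union_le _ _) ?_
      have e0 := Finset.card_union_le Q (Q.image (fun u => u + PS i 2 - PS i 1))
      have e1 := Finset.card_image_le (s := Q) (f := fun u => u + PS i 2 - PS i 1)
      have e2 : ((Finset.range i).biUnion (fun i' =>
          ({PS i 2 + PS i' 3 - PS i' 2, PS i 2 + f - PS i' 2} : Finset G))).card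
          ≤ 2 * i := by
        refine le_trans Finset.card_biUnion_le ?_
        refine le_trans (Finset.sum_le_card_nsmul _ _ 2 ?_) (by
          rw [Finset.card_range]; simp [mul_comm])
        intro i' _
        exact le_trans (Finset.card_insert_le _ _) (by simp)
      omega
    · simp
  have hExDep : ∀ i l PS PS', (∀ i', i' < i → ∀ j, PS i' j = PS' i' j) →
      (∀ j, j < l → PS i j = PS' i j) → ExtraF i l PS = ExtraF i l PS' := by
    intro i l PS PS' hprev hcur
    simp only [hExFd]
    split_ifs with h1 h2
    · subst h1
      rw [hcur 1 (by omega)]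
      refine congrArg₂ (· ∪ ·) rfl ?_
      refine Finset.image_congr (fun i' hi' => ?_)
      have := Finset.mem_range.mp hi'
      rw [hprev i' this 3, hprev i' this 2]
    · subst h2
      rw [hcur 1 (by omega), hcur 2 (by omega)]
      refine congrArg₂ (· ∪ ·) rfl ?_
      refine Finset.biUnion_congr rfl (fun i' hi' => ?_)
      have := Finset.mem_range.mp hi'
      rw [hprev i' this 3, hprev i' this 2]
    · rfl
  obtain ⟨PSF, cF, hFPS0, hFPSz, hFcval, hFps, hFsum, F1, F2r, F3, F4, F5⟩ :=
    exists_family 4 t (by norm_num) f hf0 E2 hfE2 hfib hE2card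
      ExtraF (4 * k + 4 + 2 * t) hExCard hExDep
      (by
        rw [← hn]
        have e1 : 3 * 4 * t = 12 * t := by ring
        rw [e1]
        clear_value t n
        omega)
    -- entry formulas for the F-family
  have hF0v : ∀ u : ℕ, cF u 0 = PSF u 1 := by
    intro u
    have h : cF u 0 = PSF u 1 - PSF u 0 := hFcval u 0
    rw [h, hFPS0 u, sub_zero]
  have hF1v : ∀ u : ℕ, cF u 1 = PSF u 2 - PSF u 1 := fun u => hFcval u 1
  have hF2v : ∀ u : ℕ, cF u 2 = PSF u 3 - PSF u 2 := fun u => hFcval u 2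
  have hF3v : ∀ u : ℕ, cF u 3 = f - PSF u 3 := by
    intro u
    have h : cF u 3 = PSF u 4 - PSF u 3 := hFcval u 3
    rw [h, hFPSz u 4 (by norm_num)]
  have hFp2 : ∀ u : ℕ, cF u 0 + cF u 1 = PSF u 2 := by
    intro u; rw [hF0v, hF1v]; abel
  have hFm2 : ∀ u : ℕ, cF u 2 + cF u 3 = f - PSF u 2 := by
    intro u; rw [hF2v, hF3v]; abel
  have hP1 : ∀ u : ℕ, partialSum ![cF u 0, cF u 1] 1 = PSF u 1 := by
    intro u; rw [partialSum_pair_one, hF0v]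
  have hP2 : ∀ u : ℕ, partialSum ![cF u 0, cF u 1] 2 = PSF u 2 := by
    intro u; rw [partialSum_pair_two, hFp2]
  have hM1 : ∀ u : ℕ, partialSum ![cF u 2, cF u 3] 1 = PSF u 3 - PSF u 2 := by
    intro u; rw [partialSum_pair_one, hF2v]
  have hM2 : ∀ u : ℕ, partialSum ![cF u 2, cF u 3] 2 = f - PSF u 2 := by
    intro u; rw [partialSum_pair_two, hFm2]
  -- consequences of the extra sets
  have hEx2cons : ∀ u, u < t → (∀ w ∈ Q, PSF u 2 ≠ PSF u 1 + f - w) ∧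
      (∀ v, v < u → PSF u 2 ≠ f - PSF v 3 + PSF v 2) := by
    intro u hu
    have h := F5 u hu 2 (by norm_num) (by norm_num)
    simp only [hExFd] at h
    constructor
    · intro w hw heq
      exact h (Finset.mem_union_left _ (Finset.mem_image.mpr ⟨w, hw, heq.symm⟩))
    · intro v hv heq
      exact h (Finset.mem_union_right _
        (Finset.mem_image.mpr ⟨v, Finset.mem_range.mpr hv, heq.symm⟩))
  have hEx3cons : ∀ u, u < t → (PSF u 3 ∉ Q) ∧
      (∀ w ∈ Q, PSF u 3 ≠ w + PSF u 2 - PSF u 1) ∧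
      (∀ v, v < u → PSF u 3 ≠ PSF u 2 + PSF v 3 - PSF v 2 ∧
        PSF u 3 ≠ PSF u 2 + f - PSF v 2) := by
    intro u hu
    have h := F5 u hu 3 (by norm_num) (by norm_num)
    simp only [hExFd] at h
    refine ⟨?_, ?_, ?_⟩
    · intro hq
      exact h (Finset.mem_union_left _ (Finset.mem_union_left _ hq))
    · intro w hw heq
      exact h (Finset.mem_union_left _ (Finset.mem_union_right _
        (Finset.mem_image.mpr ⟨w, hw, heq.symm⟩)))
    · intro v hv
      constructor
      · intro heq
        refine h (Finset.mem_union_right _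
          (Finset.mem_biUnion.mpr ⟨v, Finset.mem_range.mpr hv, ?_⟩))
        exact Finset.mem_insert.mpr (Or.inl heq)
      · intro heq
        refine h (Finset.mem_union_right _
          (Finset.mem_biUnion.mpr ⟨v, Finset.mem_range.mpr hv, ?_⟩))
        exact Finset.mem_insert.mpr (Or.inr (Finset.mem_singleton.mpr heq))
  have hX : ∀ u v, u < t → v < t → u ≠ v → PSF u 3 - PSF u 2 ≠ f - PSF v 2 := by
    intro u v hu hv hne heq
    rcases Nat.lt_or_ge v u with hlt | hge
    · refine ((hEx3cons u hu).2.2 v hlt).2 ?_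
      calc PSF u 3 = PSF u 2 + (PSF u 3 - PSF u 2) := by abel
        _ = PSF u 2 + (f - PSF v 2) := by rw [heq]
        _ = PSF u 2 + f - PSF v 2 := by abel
    · have hlt : u < v := by omega
      refine ((hEx2cons v hv).2 u hlt) ?_
      calc PSF v 2 = f - (f - PSF v 2) := by abel
        _ = f - (PSF u 3 - PSF u 2) := by rw [heq]
        _ = f - PSF u 3 + PSF u 2 := by abel
  -- separability helpers
  have hsep11 : ∀ u, u < t → ∀ w ∈ Q, PSF u 1 + (PSF u 3 - PSF u 2) ≠ w := by
    intro u hu w hw heq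
    refine (hEx3cons u hu).2.1 w hw ?_
    calc PSF u 3 = PSF u 1 + (PSF u 3 - PSF u 2) + PSF u 2 - PSF u 1 := by abel
      _ = w + PSF u 2 - PSF u 1 := by rw [heq]
  have hsep12 : ∀ u, u < t → ∀ w ∈ Q, PSF u 1 + (f - PSF u 2) ≠ w := by
    intro u hu w hw heq
    refine (hEx2cons u hu).1 w hw ?_
    calc PSF u 2 = PSF u 1 + f - (PSF u 1 + (f - PSF u 2)) := by abel
      _ = PSF u 1 + f - w := by rw [heq]
  have hsep21 : ∀ u, u < t → ∀ w ∈ Q, PSF u 2 + (PSF u 3 - PSF u 2) ≠ w := by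
    intro u hu w hw heq
    refine (hEx3cons u hu).1 ?_
    have hq3 : PSF u 3 = w := by
      calc PSF u 3 = PSF u 2 + (PSF u 3 - PSF u 2) := by abel
        _ = w := heq
    rw [hq3]; exact hw
  have hsep22 : ∀ u : ℕ, ∀ w ∈ Q, PSF u 2 + (f - PSF u 2) ≠ w := by
    intro u w hw heq
    refine hfQ ?_
    have hfw : f = w := by
      calc f = PSF u 2 + (f - PSF u 2) := by abel
        _ = w := heq
    rw [hfw]; exact hw
  -- assemble
  refine ⟨f, s, z, hz2, hz5, fun i => cF i.val, fun i => cS i.val,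
    fun i => ![cF i.val 0, cF i.val 1], fun i => ![cF i.val 2, cF i.val 3],
    ?_, ?_, ?_, ?_, ?_, ?_, hdvd, hq0, ?_, ?_, ?_, ?_, ?_, ?_, ?_, ?_⟩
  · intro i i' hne a b
    exact F4 i.val i.isLt i'.val i'.isLt (fun hv => hne (Fin.ext hv)) a b
  · intro i i' hne a b
    exact S4 i.val i.isLt i'.val i'.isLt (fun hv => hne (Fin.ext hv)) a b
  · exact fun i => hFsum i.val
  · exact fun i => hSsum i.val
  · intro i
    refine ⟨S2r i.val i.isLt, ?_⟩
    intro j j' hj hj' hne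
    rw [hSps i.val j hj, hSps i.val j' hj']
    exact S1 i.val i.isLt j hj j' hj' hne
  · intro i i' hne j j' h1 h2 h3 h4
    rw [hSps i.val j (by omega), hSps i'.val j' (by omega)]
    exact S3 i.val i.isLt i'.val i'.isLt (fun hv => hne (Fin.ext hv)) j j' h1 h2 h3 h4
  · intro i
    exact ⟨rfl, rfl, rfl, rfl⟩
  · -- Fp injective and path candidate
    intro i
    have hne01 : cF i.val 0 ≠ cF i.val 1 := by
      intro h
      have := F2r i.val i.isLt h
      exact absurd this (by decide)
    refine ⟨injective_pair _ _ hne01, ?_⟩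
    refine isPathCandidate_pair _ _ ?_ ?_ ?_
    · rw [hF0v]
      intro h
      exact F1 i.val i.isLt 1 (by norm_num) 0 (by norm_num) (by norm_num)
        (by rw [h, hFPS0])
    · rw [hFp2]
      intro h
      exact F1 i.val i.isLt 2 (by norm_num) 0 (by norm_num) (by norm_num)
        (by rw [h, hFPS0])
    · rw [hFp2, hF0v]
      exact F1 i.val i.isLt 1 (by norm_num) 2 (by norm_num) (by norm_num)
  · -- Fm injective and path candidate
    intro i
    have hne23 : cF i.val 2 ≠ cF i.val 3 := by
      intro h
      have := F2r i.val i.isLt h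
      exact absurd this (by decide)
    refine ⟨injective_pair _ _ hne23, ?_⟩
    refine isPathCandidate_pair _ _ ?_ ?_ ?_
    · rw [hF2v]
      exact sub_ne_zero_of_ne (F1 i.val i.isLt 3 (by norm_num) 2 (by norm_num) (by norm_num))
    · rw [hFm2]
      refine sub_ne_zero_of_ne ?_
      have h := F1 i.val i.isLt 4 (by norm_num) 2 (by norm_num) (by norm_num)
      rw [hFPSz i.val 4 (by norm_num)] at h
      exact h
    · rw [hFm2, hF2v]
      intro h
      have h2 := sub_left_inj.mp h
      have h3 := F1 i.val i.isLt 3 (by norm_num) 4 (by norm_num) (by norm_num)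
      rw [hFPSz i.val 4 (by norm_num)] at h3
      exact h3 h2
  · -- Fp dissociable
    intro i i' hne j j' h1 h2 h3 h4
    have hv : i.val ≠ i'.val := fun hv => hne (Fin.ext hv)
    interval_cases j <;> interval_cases j'
    · rw [hP1, hP1]; exact F3 i.val i.isLt i'.val i'.isLt hv 1 1 (by norm_num)
        (by norm_num) (by norm_num) (by norm_num)
    · rw [hP1, hP2]; exact F3 i.val i.isLt i'.val i'.isLt hv 1 2 (by norm_num)
        (by norm_num) (by norm_num) (by norm_num)
    · rw [hP2, hP1]; exact F3 i.val i.isLt i'.val i'.isLt hv 2 1 (by norm_num)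
        (by norm_num) (by norm_num) (by norm_num)
    · rw [hP2, hP2]; exact F3 i.val i.isLt i'.val i'.isLt hv 2 2 (by norm_num)
        (by norm_num) (by norm_num) (by norm_num)
  · -- Fm dissociable
    intro i i' hne j j' h1 h2 h3 h4
    have hv : i.val ≠ i'.val := fun hv => hne (Fin.ext hv)
    interval_cases j <;> interval_cases j'
    · rw [hM1, hM1, ← hF2v, ← hF2v]
      exact F4 i.val i.isLt i'.val i'.isLt hv 2 2
    · rw [hM1, hM2]
      exact hX i.val i'.val i.isLt i'.isLt hv
    · rw [hM2, hM1]
      exact (hX i'.val i.val i'.isLt i.isLt (Ne.symm hv)).symm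
    · rw [hM2, hM2]
      intro heq
      exact F3 i.val i.isLt i'.val i'.isLt hv 2 2 (by norm_num) (by norm_num)
        (by norm_num) (by norm_num) (sub_right_inj.mp heq)
  · -- F injective and path candidate
    intro i
    refine ⟨F2r i.val i.isLt, ?_⟩
    intro j j' hj hj' hne
    rw [hFps i.val j hj, hFps i.val j' hj']
    exact F1 i.val i.isLt j hj j' hj' hne
  · -- F near-dissociable
    intro i i' hne j j' h1 h2 h3 h4
    rw [hFps i.val j (by omega), hFps i'.val j' (by omega)]
    exact F3 i.val i.isLt i'.val i'.isLt (fun hv => hne (Fin.ext hv)) j j' h1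
      (by omega) h3 (by omega)
  · -- separability
    intro m hm i j j' h1 h2 h3 h4
    have hu := i.isLt
    have hd1 := (hdistQ m hm).1
    have hd2 := (hdistQ m hm).2
    interval_cases j <;> interval_cases j'
    · exact ⟨by rw [hP1, hM1]; exact hsep11 i.val hu _ hd1,
        by rw [hP1, hM1]; exact hsep11 i.val hu _ hd2⟩
    · exact ⟨by rw [hP1, hM2]; exact hsep12 i.val hu _ hd1,
        by rw [hP1, hM2]; exact hsep12 i.val hu _ hd2⟩
    · exact ⟨by rw [hP2, hM1]; exact hsep21 i.val hu _ hd1,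
        by rw [hP2, hM1]; exact hsep21 i.val hu _ hd2⟩
    · exact ⟨by rw [hP2, hM2]; exact hsep22 i.val _ hd1,
        by rw [hP2, hM2]; exact hsep22 i.val _ hd2⟩
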